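/- arXiv:2312.09497 — 2 statements merged into one kernel-verified Lean document; each statement's English description precedes it below -/
import Mathlib

section
/- Let α ∈ (0,1) and let ψ : ℝ → ℝ be given by ψ(x₁) = dist(x₁, C)^α for x₁ ∈ (0,1) and ψ(x₁) = 0 otherwise. Then for every x₁ ∈ C \ {0,1} one has limsup_{t→0⁺} ψ(x₁ + t)/t^α > 0 and limsup_{t→0⁺} ψ(x₁ − t)/t^α > 0. -/
open MeasureTheory Set Metric Filter Topology
open scoped ENNReal NNReal

noncomputable section

/-- The cusp function `ψ(x) = dist(x, C)^α` on `(0,1)`, zero elsewhere; here `C = cantorSet`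
is Mathlib's classical ternary Cantor set. -/
def psiC (α : ℝ) (x : ℝ) : ℝ :=
  if x ∈ Ioo (0 : ℝ) 1 then infDist x cantorSet ^ α else 0

/-- The domain above the Cantor-cuspidal graph. -/
def OmegaPlus (α : ℝ) : Set (ℝ × ℝ) := {x | psiC α x.1 < x.2}

/-- The domain below the Cantor-cuspidal graph. -/
def OmegaMinus (α : ℝ) : Set (ℝ × ℝ) := {x | x.2 < psiC α x.1}

/-- The Cantor-cuspidal graph `Γ`. -/
def graphC (α : ℝ) : Set (ℝ × ℝ) := {x | x.2 = psiC α x.1}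

/-! ### Auxiliary lemmas about the Cantor set -/

lemma one_mem_preCantorSet' (n : ℕ) : (1 : ℝ) ∈ preCantorSet n := by
  induction n with
  | zero => simp [preCantorSet]
  | succ n ih => exact Or.inr ⟨1, ih, by norm_num⟩

lemma one_mem_cantorSet' : (1 : ℝ) ∈ cantorSet :=
  Set.mem_iInter.mpr one_mem_preCantorSet'

lemma cantorSet_nonempty' : cantorSet.Nonempty := ⟨0, zero_mem_cantorSet⟩

lemma preCantorSet_subset_unitInterval' : ∀ n, preCantorSet n ⊆ Set.Icc (0:ℝ) 1 := by
  intro n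
  induction n with
  | zero => simp [preCantorSet]
  | succ n ih =>
    rintro x (⟨y, hy, rfl⟩ | ⟨y, hy, rfl⟩) <;>
      obtain ⟨h0, h1⟩ := ih hy <;> constructor <;> linarith

/-- A lower bound on `infDist` to the Cantor set from pointwise bounds. -/
lemma le_infDist_cantor {w b : ℝ} (h : ∀ p ∈ cantorSet, b ≤ dist w p) :
    b ≤ infDist w cantorSet := by
  by_contra hlt
  push_neg at hlt
  obtain ⟨p, hp, hd⟩ := (infDist_lt_iff cantorSet_nonempty').1 hlt
  exact absurd hd (not_lt.2 (h p hp))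

/-- Self-similarity dichotomy for the Cantor set. -/
lemma cantorSet_dichotomy {x : ℝ} (hx : x ∈ cantorSet) :
    (x < 2/3 ∧ 3 * x ∈ cantorSet) ∨ (2/3 ≤ x ∧ 3 * x - 2 ∈ cantorSet) := by
  by_cases h : x < 2/3
  · left
    refine ⟨h, Set.mem_iInter.mpr fun n => ?_⟩
    have hx' : x ∈ preCantorSet (n + 1) := Set.mem_iInter.mp hx (n + 1)
    rcases hx' with ⟨y, hy, rfl⟩ | ⟨y, hy, rfl⟩
    · have : 3 * (y / 3) = y := by ring
      rw [this]; exact hy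
    · obtain ⟨h0, _⟩ := preCantorSet_subset_unitInterval' n hy
      exfalso; linarith [h]
  · right
    push_neg at h
    refine ⟨h, Set.mem_iInter.mpr fun n => ?_⟩
    have hx' : x ∈ preCantorSet (n + 1) := Set.mem_iInter.mp hx (n + 1)
    rcases hx' with ⟨y, hy, rfl⟩ | ⟨y, hy, rfl⟩
    · obtain ⟨_, h1⟩ := preCantorSet_subset_unitInterval' n hy
      exfalso; linarith [h]
    · have : 3 * ((2 + y) / 3) - 2 = y := by ring
      rw [this]; exact hy

/-- Every point of the Cantor set is outside the middle-third gap. -/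
lemma cantorSet_avoids_middle {p : ℝ} (hp : p ∈ cantorSet) : p ≤ 1/3 ∨ 2/3 ≤ p := by
  have h1 : p ∈ preCantorSet 1 := Set.mem_iInter.mp hp 1
  rcases h1 with ⟨y, hy, rfl⟩ | ⟨y, hy, rfl⟩ <;>
    obtain ⟨h0, h1⟩ := preCantorSet_subset_unitInterval' 0 hy
  · left; linarith
  · right; linarith

/-- Points in the middle gap are far from the Cantor set. -/
lemma middle_gap_infDist {w : ℝ} (h1 : 1/3 ≤ w) (h2 : w ≤ 2/3) :
    min (w - 1/3) (2/3 - w) ≤ infDist w cantorSet := by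
  apply le_infDist_cantor
  intro p hp
  rw [Real.dist_eq]
  rcases cantorSet_avoids_middle hp with h | h
  · calc min (w - 1/3) (2/3 - w) ≤ w - 1/3 := min_le_left _ _
      _ ≤ w - p := by linarith
      _ ≤ |w - p| := le_abs_self _
  · calc min (w - 1/3) (2/3 - w) ≤ 2/3 - w := min_le_right _ _
      _ ≤ p - w := by linarith
      _ ≤ |w - p| := by rw [abs_sub_comm]; exact le_abs_self _

/-- Scaling bound, left copy. -/
lemma infDist_scale_left {z : ℝ} (hz : z ≤ 3/2) :
    infDist z cantorSet / 3 ≤ infDist (z / 3) cantorSet := by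
  apply le_infDist_cantor
  intro p hp
  rcases cantorSet_dichotomy hp with ⟨_, hq⟩ | ⟨hge, _⟩
  · have h1 : infDist z cantorSet ≤ dist z (3 * p) := infDist_le_dist_of_mem hq
    rw [Real.dist_eq] at h1 ⊢
    have : |z - 3 * p| = 3 * |z / 3 - p| := by
      rw [show z - 3 * p = 3 * (z / 3 - p) by ring, abs_mul]
      norm_num
    linarith [h1, this ▸ h1]
  · have h1 : infDist z cantorSet ≤ dist z 1 := infDist_le_dist_of_mem one_mem_cantorSet'
    rw [Real.dist_eq] at h1
    have h2 : |z - 1| ≤ 2 - z := by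
      rcases abs_cases (z - 1) with ⟨he, _⟩ | ⟨he, _⟩ <;> rw [he] <;> linarith
    rw [Real.dist_eq]
    have h3 : p - z / 3 ≤ |z / 3 - p| := by rw [abs_sub_comm]; exact le_abs_self _
    linarith

/-- Scaling bound, right copy. -/
lemma infDist_scale_right {z : ℝ} (hz : 0 ≤ z) :
    infDist z cantorSet / 3 ≤ infDist ((2 + z) / 3) cantorSet := by
  apply le_infDist_cantor
  intro p hp
  rcases cantorSet_dichotomy hp with ⟨hlt, _⟩ | ⟨_, hq⟩
  · have h1 : infDist z cantorSet ≤ dist z 0 := infDist_le_dist_of_mem zero_mem_cantorSet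
    rw [Real.dist_eq, sub_zero, abs_of_nonneg hz] at h1
    rw [Real.dist_eq]
    have h3 : (2 + z) / 3 - p ≤ |(2 + z) / 3 - p| := le_abs_self _
    linarith
  · have h1 : infDist z cantorSet ≤ dist z (3 * p - 2) := infDist_le_dist_of_mem hq
    rw [Real.dist_eq] at h1 ⊢
    have : |z - (3 * p - 2)| = 3 * |(2 + z) / 3 - p| := by
      rw [show z - (3 * p - 2) = 3 * ((2 + z) / 3 - p) by ring, abs_mul]
      norm_num
    linarith [this ▸ h1]

/-- Key gap lemma: to the right of any Cantor point at distance `≲ 3⁻ⁿ` from below `1`,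
there is a point at scale `3⁻ⁿ` whose distance to the Cantor set is comparable. -/
lemma cantor_gap_right : ∀ (n : ℕ) (x : ℝ), x ∈ cantorSet → x ≤ 1 - (1/3:ℝ)^n →
    ∃ t : ℝ, 0 < t ∧ t ≤ (3/2) * (1/3:ℝ)^n ∧ x + t ≤ 1 ∧
      t / 6 ≤ infDist (x + t) cantorSet := by
  intro n
  induction n with
  | zero =>
    intro x hx hle
    have h0 : 0 ≤ x := (cantorSet_subset_unitInterval hx).1
    have hx0 : x = 0 := le_antisymm (by norm_num at hle; linarith) h0
    refine ⟨1/2, by norm_num, by norm_num, by rw [hx0]; norm_num, ?_⟩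
    rw [hx0, zero_add]
    have := middle_gap_infDist (w := 1/2) (by norm_num) (by norm_num)
    norm_num at this ⊢
    linarith
  | succ n ih =>
    intro x hx hle
    have hpow : (0:ℝ) < (1/3:ℝ)^n := by positivity
    rcases cantorSet_dichotomy hx with ⟨hlt, hy⟩ | ⟨hge, hy⟩
    · -- x < 2/3, so x = y/3 with y = 3x ∈ C, in particular x ≤ 1/3
      have hy01 := cantorSet_subset_unitInterval hy
      have hx13 : x ≤ 1/3 := by linarith [hy01.2]
      by_cases hcase : x ≤ 1/3 - (1/3:ℝ)^(n+1)
      · -- deep inside the left copy: rescale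
        have hyle : 3 * x ≤ 1 - (1/3:ℝ)^n := by
          rw [pow_succ] at hcase; linarith
        obtain ⟨t, ht0, htle, hts, htd⟩ := ih (3 * x) hy hyle
        refine ⟨t / 3, by linarith, ?_, by linarith, ?_⟩
        · rw [pow_succ]; linarith
        · have hz : (3 * x + t) ≤ 3/2 := by linarith
          have := infDist_scale_left hz
          have heq : (3 * x + t) / 3 = x + t / 3 := by ring
          rw [heq] at this
          linarith
      · -- x is close to 1/3: use the middle-third gap
        push_neg at hcase
        set s : ℝ := (1/3:ℝ)^(n+1) with hs
        have hs0 : (0:ℝ) < s := by positivity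
        have hs16 : s ≤ 1/3 := by
          rw [hs, pow_succ]
          nlinarith [pow_le_one₀ (by norm_num : (0:ℝ) ≤ 1/3) (by norm_num : (1/3:ℝ) ≤ 1) (n := n)]
        refine ⟨1/3 + s/2 - x, by linarith, by linarith, by linarith, ?_⟩
        have hw1 : 1/3 ≤ x + (1/3 + s/2 - x) := by linarith
        have hw2 : x + (1/3 + s/2 - x) ≤ 2/3 := by linarith
        have := middle_gap_infDist hw1 hw2
        have hmin : min ((x + (1/3 + s/2 - x)) - 1/3) (2/3 - (x + (1/3 + s/2 - x))) ≥
            (1/3 + s/2 - x) / 6 := by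
          apply le_min <;> [skip; skip] <;>
          · have : x + (1/3 + s/2 - x) = 1/3 + s/2 := by ring
            rw [this]; linarith
        linarith [le_trans hmin.le this] 
    · -- x ≥ 2/3: x = (2+y)/3 with y = 3x - 2 ∈ C
      have hyle : 3 * x - 2 ≤ 1 - (1/3:ℝ)^n := by
        rw [pow_succ] at hle; linarith
      obtain ⟨t, ht0, htle, hts, htd⟩ := ih (3 * x - 2) hy hyle
      have hy0 := (cantorSet_subset_unitInterval hy).1
      refine ⟨t / 3, by linarith, ?_, by linarith, ?_⟩
      · rw [pow_succ]; linarith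
      · have hz : (0:ℝ) ≤ (3 * x - 2) + t := by linarith
        have := infDist_scale_right hz
        have heq : (2 + ((3 * x - 2) + t)) / 3 = x + t / 3 := by ring
        rw [heq] at this
        linarith

/-- Reflection symmetry of the pre-Cantor sets. -/
lemma preCantorSet_reflect : ∀ (n : ℕ) {x : ℝ}, x ∈ preCantorSet n → 1 - x ∈ preCantorSet n := by
  intro n
  induction n with
  | zero => intro x hx; obtain ⟨h0, h1⟩ := hx; exact ⟨by linarith, by linarith⟩
  | succ n ih =>
    rintro x (⟨y, hy, rfl⟩ | ⟨y, hy, rfl⟩)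
    · exact Or.inr ⟨1 - y, ih hy, by ring⟩
    · exact Or.inl ⟨1 - y, ih hy, by ring⟩

lemma cantorSet_reflect {x : ℝ} (hx : x ∈ cantorSet) : 1 - x ∈ cantorSet :=
  Set.mem_iInter.mpr fun n => preCantorSet_reflect n (Set.mem_iInter.mp hx n)

lemma infDist_reflect (w : ℝ) : infDist (1 - w) cantorSet = infDist w cantorSet := by
  have key : ∀ v : ℝ, infDist (1 - v) cantorSet ≤ infDist v cantorSet := by
    intro v
    by_contra h
    push_neg at h
    obtain ⟨p, hp, hd⟩ := (infDist_lt_iff cantorSet_nonempty').1 h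
    have : infDist (1 - v) cantorSet ≤ dist (1 - v) (1 - p) :=
      infDist_le_dist_of_mem (cantorSet_reflect hp)
    rw [Real.dist_eq] at this hd
    have : infDist (1 - v) cantorSet ≤ |v - p| := by
      rwa [show (1 - v) - (1 - p) = -(v - p) by ring, abs_neg] at this
    linarith
  have h1 := key w
  have h2 := key (1 - w)
  rw [show 1 - (1 - w) = w by ring] at h2
  linarith

lemma psiC_reflect (α w : ℝ) : psiC α (1 - w) = psiC α w := by
  unfold psiC
  have hmem : (1 - w) ∈ Ioo (0:ℝ) 1 ↔ w ∈ Ioo (0:ℝ) 1 := by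
    constructor <;> intro ⟨h1, h2⟩ <;> constructor <;> linarith
  by_cases h : w ∈ Ioo (0:ℝ) 1
  · rw [if_pos (hmem.mpr h), if_pos h, infDist_reflect]
  · rw [if_neg (fun hh => h (hmem.mp hh)), if_neg h]

/-- The one-sided limsup bound at a Cantor point `x < 1`, right side. -/
lemma limsup_right_pos (α : ℝ) (hα₀ : 0 < α) {x : ℝ} (hx : x ∈ cantorSet) (hx1 : x < 1) :
    0 < Filter.limsup (fun t : ℝ => psiC α (x + t) / t ^ α) (𝓝[>] (0 : ℝ)) := by
  have hx0 : 0 ≤ x := (cantorSet_subset_unitInterval hx).1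
  set f : ℝ → ℝ := fun t => psiC α (x + t) / t ^ α with hf
  have hbdd : IsBoundedUnder (· ≤ ·) (𝓝[>] (0:ℝ)) f := by
    apply isBoundedUnder_of_eventually_le (a := 1)
    filter_upwards [eventually_mem_nhdsWithin] with t ht
    have ht0 : (0:ℝ) < t := ht
    have htα : (0:ℝ) < t ^ α := Real.rpow_pos_of_pos ht0 α
    rw [hf]
    simp only
    unfold psiC
    by_cases hmem : x + t ∈ Ioo (0:ℝ) 1
    · rw [if_pos hmem]
      have hd : infDist (x + t) cantorSet ≤ t := by
        have := infDist_le_dist_of_mem (x := x + t) hx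
        rwa [Real.dist_eq, show x + t - x = t by ring, abs_of_pos ht0] at this
      have : infDist (x + t) cantorSet ^ α ≤ t ^ α :=
        Real.rpow_le_rpow infDist_nonneg hd hα₀.le
      rw [div_le_one htα]
      exact this
    · rw [if_neg hmem]
      rw [zero_div]
      norm_num
  have hfreq : ∃ᶠ t in 𝓝[>] (0:ℝ), (1/6:ℝ) ^ α ≤ f t := by
    rw [(nhdsGT_basis (0:ℝ)).frequently_iff]
    intro ε hε
    -- choose n with (1/3)^n small enough
    obtain ⟨n, hn⟩ := exists_pow_lt_of_lt_one
      (show (0:ℝ) < min (1 - x) (2/3 * ε) by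
        apply lt_min <;> [linarith; positivity]) (by norm_num : (1/3:ℝ) < 1)
    have hn1 : (1/3:ℝ)^n < 1 - x := lt_of_lt_of_le hn (min_le_left _ _)
    have hn2 : (1/3:ℝ)^n < 2/3 * ε := lt_of_lt_of_le hn (min_le_right _ _)
    obtain ⟨t, ht0, htle, hts, htd⟩ := cantor_gap_right n x hx (by linarith)
    have htε : t < ε := by linarith
    have htlt1 : x + t < 1 := by
      rcases lt_or_eq_of_le hts with h | h
      · exact h
      · exfalso
        have : infDist (x + t) cantorSet = 0 := by
          rw [h]; exact infDist_zero_of_mem one_mem_cantorSet'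
        rw [this] at htd; linarith
    refine ⟨t, ⟨ht0, htε⟩, ?_⟩
    have hmem : x + t ∈ Ioo (0:ℝ) 1 := ⟨by linarith, htlt1⟩
    rw [hf]
    simp only
    unfold psiC
    rw [if_pos hmem]
    have hd0 : (0:ℝ) < infDist (x + t) cantorSet := lt_of_lt_of_le (by linarith) htd
    have hratio : (1/6:ℝ) ≤ infDist (x + t) cantorSet / t := by
      rw [le_div_iff₀ ht0]; linarith
    calc (1/6:ℝ) ^ α ≤ (infDist (x + t) cantorSet / t) ^ α :=
          Real.rpow_le_rpow (by norm_num) hratio hα₀.le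
      _ = infDist (x + t) cantorSet ^ α / t ^ α :=
          Real.div_rpow infDist_nonneg ht0.le α
  calc (0:ℝ) < (1/6:ℝ) ^ α := Real.rpow_pos_of_pos (by norm_num) α
    _ ≤ Filter.limsup f (𝓝[>] (0:ℝ)) := le_limsup_of_frequently_le hfreq hbdd

/-- At every point of the Cantor set other than `0` and `1`, the graph of `ψ` is cusp-like
from both sides: `limsup_{t→0⁺} ψ(x+t)/t^α > 0` and `limsup_{t→0⁺} ψ(x−t)/t^α > 0`. -/
theorem psiC_cusp_limsup_pos (α : ℝ) (hα₀ : 0 < α) (hα₁ : α < 1) (x : ℝ)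
    (hx : x ∈ cantorSet) (hx₀ : x ≠ 0) (hx₁ : x ≠ 1) :
    0 < Filter.limsup (fun t : ℝ => psiC α (x + t) / t ^ α) (𝓝[>] (0 : ℝ)) ∧
    0 < Filter.limsup (fun t : ℝ => psiC α (x - t) / t ^ α) (𝓝[>] (0 : ℝ)) := by
  obtain ⟨h0, h1⟩ := cantorSet_subset_unitInterval hx
  have hx1' : x < 1 := lt_of_le_of_ne h1 hx₁
  have hx0' : 0 < x := lt_of_le_of_ne h0 (Ne.symm hx₀)
  constructor
  · exact limsup_right_pos α hα₀ hx hx1'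
  · have hx' : (1 - x) ∈ cantorSet := cantorSet_reflect hx
    have hx'1 : 1 - x < 1 := by linarith
    have := limsup_right_pos α hα₀ hx' hx'1
    have heq : (fun t : ℝ => psiC α (x - t) / t ^ α) =
        (fun t : ℝ => psiC α ((1 - x) + t) / t ^ α) := by
      funext t
      rw [show (1 - x) + t = 1 - (x - t) by ring, psiC_reflect]
    rw [heq]
    exact this
end
end

section
/- For every α ∈ (0,1), neither Ω⁺ nor Ω⁻ is quasiconvex: for every constant K ≥ 1 there exist points x, y in the domain such that every rectifiable curve joining x to y inside the domain has length greater than K·|x − y|. -/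
open MeasureTheory Set Metric Filter Topology
open scoped ENNReal NNReal

noncomputable section

/-- The domain `Ω ⊂ ℝ²` is not quasiconvex: for every `K ≥ 1` there are points
`x, y ∈ Ω` such that every curve joining `x` to `y` inside `Ω` has length (total
variation) greater than `K * dist x y`. -/
def NotQuasiconvex (Ω : Set (ℝ × ℝ)) : Prop :=
  ∀ K : ℝ, 1 ≤ K → ∃ x ∈ Ω, ∃ y ∈ Ω,
    ∀ γ : ℝ → ℝ × ℝ, ContinuousOn γ (Icc 0 1) → γ 0 = x → γ 1 = y →
      γ '' Icc 0 1 ⊆ Ω → ENNReal.ofReal (K * dist x y) < eVariationOn γ (Icc 0 1)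

/-! ### Auxiliary facts about the ternary Cantor set -/

lemma myPreCantor_subset (n : ℕ) : preCantorSet n ⊆ Icc (0:ℝ) 1 := by
  induction n with
  | zero => simp [preCantorSet]
  | succ n ih =>
    rintro x (⟨y, hy, rfl⟩ | ⟨y, hy, rfl⟩) <;>
      · obtain ⟨h0, h1⟩ := ih hy
        constructor <;> [linarith; linarith]

lemma myOne_mem_cantorSet : (1:ℝ) ∈ cantorSet := by
  refine Set.mem_iInter.mpr fun n => ?_
  induction n with
  | zero => simp [preCantorSet]
  | succ n ih => exact Or.inr ⟨1, ih, by norm_num⟩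

lemma myDiv3_mem {x : ℝ} (h : x ∈ cantorSet) : x / 3 ∈ cantorSet := by
  refine Set.mem_iInter.mpr fun n => ?_
  match n with
  | 0 =>
    obtain ⟨h0, h1⟩ := cantorSet_subset_unitInterval h
    constructor <;> [linarith; linarith]
  | n + 1 => exact Or.inl ⟨x, Set.mem_iInter.mp h n, rfl⟩

lemma myTwoAdd_mem {x : ℝ} (h : x ∈ cantorSet) : (2 + x) / 3 ∈ cantorSet := by
  refine Set.mem_iInter.mpr fun n => ?_
  match n with
  | 0 =>
    obtain ⟨h0, h1⟩ := cantorSet_subset_unitInterval h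
    constructor <;> [linarith; linarith]
  | n + 1 => exact Or.inr ⟨x, Set.mem_iInter.mp h n, rfl⟩

lemma myMul3_mem {x : ℝ} (h : x ∈ cantorSet) (hx : x ≤ 1/3) : 3 * x ∈ cantorSet := by
  refine Set.mem_iInter.mpr fun n => ?_
  have := Set.mem_iInter.mp h (n + 1)
  rcases this with ⟨y, hy, rfl⟩ | ⟨y, hy, rfl⟩
  · convert hy using 1; ring
  · obtain ⟨h0, h1⟩ := myPreCantor_subset n hy
    nlinarith

lemma myMul3Sub2_mem {x : ℝ} (h : x ∈ cantorSet) (hx : 2/3 ≤ x) : 3 * x - 2 ∈ cantorSet := by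
  refine Set.mem_iInter.mpr fun n => ?_
  have := Set.mem_iInter.mp h (n + 1)
  rcases this with ⟨y, hy, rfl⟩ | ⟨y, hy, rfl⟩
  · obtain ⟨h0, h1⟩ := myPreCantor_subset n hy
    nlinarith
  · convert hy using 1; ring

lemma myBaseGap {x : ℝ} (h : x ∈ cantorSet) : x ≤ 1/3 ∨ 2/3 ≤ x := by
  have := Set.mem_iInter.mp h 1
  rcases this with ⟨y, hy, rfl⟩ | ⟨y, hy, rfl⟩ <;>
    obtain ⟨h0, h1⟩ := myPreCantor_subset 0 hy
  · left; linarith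
  · right; linarith

lemma myDivPow_mem {x : ℝ} (h : x ∈ cantorSet) : ∀ n : ℕ, x / 3 ^ n ∈ cantorSet := by
  intro n
  induction n with
  | zero => simpa using h
  | succ n ih =>
    have : x / 3 ^ (n + 1) = (x / 3 ^ n) / 3 := by ring
    rw [this]
    exact myDiv3_mem ih

lemma myGap1 : ∀ n : ℕ, ∀ x ∈ cantorSet, ¬(1 / 3 ^ (n+1) < x ∧ x < 2 / 3 ^ (n+1)) := by
  intro n
  induction n with
  | zero =>
    rintro x hx ⟨h1, h2⟩
    rcases myBaseGap hx with h | h <;> norm_num at h1 h2 <;> linarith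
  | succ n ih =>
    rintro x hx ⟨h1, h2⟩
    have hx3 : x ≤ 1/3 := by
      have h3 : (2:ℝ) / 3 ^ (n+2) ≤ 2/9 := by
        have : (9:ℝ) ≤ 3 ^ (n+2) := by
          calc (9:ℝ) = 3 ^ 2 := by norm_num
          _ ≤ 3 ^ (n+2) := by
            apply pow_le_pow_right₀ (by norm_num) (by omega)
        rw [div_le_div_iff₀ (by positivity) (by norm_num)]
        linarith
      linarith
    have h3x := myMul3_mem hx hx3
    have hp : (3:ℝ) ^ (n+1+1) = 3 * 3 ^ (n+1) := by ring
    rw [hp] at h1 h2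
    have hpos : (0:ℝ) < 3 ^ (n+1) := by positivity
    refine ih (3 * x) h3x ⟨?_, ?_⟩
    · rw [div_lt_iff₀ hpos]
      rw [div_lt_iff₀ (by positivity)] at h1
      nlinarith
    · rw [lt_div_iff₀ hpos]
      rw [lt_div_iff₀ (by positivity)] at h2
      nlinarith

lemma myGap2 : ∀ n : ℕ, ∀ x ∈ cantorSet, ¬(7 / 3 ^ (n+2) < x ∧ x < 8 / 3 ^ (n+2)) := by
  intro n
  induction n with
  | zero =>
    rintro x hx ⟨h1, h2⟩
    norm_num at h1 h2
    have hx3 : 2/3 ≤ x := by linarith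
    have hy := myMul3Sub2_mem hx hx3
    refine myGap1 0 (3 * x - 2) hy ⟨?_, ?_⟩ <;> norm_num <;> linarith
  | succ n ih =>
    rintro x hx ⟨h1, h2⟩
    have hp : (3:ℝ) ^ (n+1+2) = 3 * 3 ^ (n+2) := by ring
    rw [hp] at h1 h2
    have hpos : (0:ℝ) < 3 ^ (n+2) := by positivity
    have hx3 : x ≤ 1/3 := by
      have h9 : (9:ℝ) ≤ 3 ^ (n+2) := by
        calc (9:ℝ) = 3 ^ 2 := by norm_num
        _ ≤ 3 ^ (n+2) := pow_le_pow_right₀ (by norm_num) (by omega)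
      rw [lt_div_iff₀ (by positivity)] at h2
      nlinarith
    refine ih (3 * x) (myMul3_mem hx hx3) ⟨?_, ?_⟩
    · rw [div_lt_iff₀ hpos]
      rw [div_lt_iff₀ (by positivity)] at h1
      nlinarith
    · rw [lt_div_iff₀ hpos]
      rw [lt_div_iff₀ (by positivity)] at h2
      nlinarith

lemma myMem_t (n : ℕ) : 1 / 3 ^ (n+2) ∈ cantorSet := by
  simpa using myDivPow_mem myOne_mem_cantorSet (n+2)

lemma myMem_2t (n : ℕ) : 2 / 3 ^ (n+2) ∈ cantorSet := by
  have h23 : (2:ℝ)/3 ∈ cantorSet := by simpa using myTwoAdd_mem zero_mem_cantorSet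
  have := myDivPow_mem h23 (n+1)
  convert this using 1
  rw [pow_succ]
  ring

lemma myMem_7t (n : ℕ) : 7 / 3 ^ (n+2) ∈ cantorSet := by
  have h13 : (1:ℝ)/3 ∈ cantorSet := by simpa using myDiv3_mem myOne_mem_cantorSet
  have h79 : (7:ℝ)/9 ∈ cantorSet := by
    have := myTwoAdd_mem h13
    convert this using 1
    norm_num
  have := myDivPow_mem h79 n
  convert this using 1
  rw [pow_add]
  norm_num
  ring

lemma myInfDist {m d : ℝ} (hd : 0 < d) (hmem : m - d ∈ cantorSet)
    (hgap : ∀ z ∈ cantorSet, ¬(m - d < z ∧ z < m + d)) : infDist m cantorSet = d := by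
  apply le_antisymm
  · have := infDist_le_dist_of_mem (x := m) hmem
    rwa [Real.dist_eq, show m - (m - d) = d by ring, abs_of_pos hd] at this
  · refine le_of_not_gt fun hlt => ?_
    rw [infDist_lt_iff ⟨_, hmem⟩] at hlt
    obtain ⟨z, hz, hdz⟩ := hlt
    rw [Real.dist_eq, abs_lt] at hdz
    exact hgap z hz ⟨by linarith [hdz.1], by linarith [hdz.2]⟩

/-! ### Analytic auxiliary lemmas -/

lemma myParam {α : ℝ} (hα₀ : 0 < α) (hα₁ : α < 1) (K : ℝ) (hK : 1 ≤ K) :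
    ∃ n : ℕ, 6 * K * (1 / 3 ^ (n+2)) < ((1 / 3 ^ (n+2)) / 2 : ℝ) ^ α := by
  set u : ℝ := (3:ℝ) ^ (1 - α) with hu_def
  have hu : 1 < u := by
    rw [hu_def]
    rw [Real.one_lt_rpow_iff_of_pos (by norm_num)]
    exact Or.inl ⟨by norm_num, by linarith⟩
  obtain ⟨m, hm⟩ := pow_unbounded_of_one_lt (12 * K) hu
  refine ⟨m, ?_⟩
  set t : ℝ := 1 / 3 ^ (m+2) with ht_def
  have ht : 0 < t := by positivity
  have key : t ^ (α - 1) = u ^ (m+2) := by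
    have h3 : t = (3:ℝ) ^ (-((m:ℝ)+2)) := by
      rw [ht_def, Real.rpow_neg (by norm_num), ← Real.rpow_natCast 3 (m+2)]
      push_cast
      rw [one_div]
    rw [h3, ← Real.rpow_natCast u (m+2), hu_def, ← Real.rpow_mul (by norm_num),
      ← Real.rpow_mul (by norm_num)]
    push_cast
    ring_nf
  have hmono : u ^ m ≤ u ^ (m+2) := pow_le_pow_right₀ hu.le (by omega)
  have h12K : 12 * K < t ^ (α - 1) := by rw [key]; exact hm.trans_le hmono
  have h2a : (0:ℝ) < (2:ℝ) ^ α := Real.rpow_pos_of_pos two_pos α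
  have h2le : (2:ℝ) ^ α ≤ 2 := by
    calc (2:ℝ) ^ α ≤ (2:ℝ) ^ (1:ℝ) :=
      Real.rpow_le_rpow_of_exponent_le (by norm_num) hα₁.le
    _ = 2 := Real.rpow_one 2
  have htα : t ^ α = t ^ (α - 1) * t := by
    conv_lhs => rw [show α = α - 1 + 1 by ring]
    rw [Real.rpow_add ht, Real.rpow_one]
  have hdiv : ((t / 2 : ℝ)) ^ α = t ^ α / (2:ℝ) ^ α :=
    Real.div_rpow ht.le (by norm_num) α
  rw [hdiv, htα]
  have hKpos : 0 < 12 * K := by linarith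
  calc 6 * K * t = (12 * K) * t / 2 := by ring
  _ < t ^ (α - 1) * t / 2 := by gcongr
  _ ≤ t ^ (α - 1) * t / (2:ℝ) ^ α := by gcongr

lemma myCross (γ : ℝ → ℝ × ℝ) (hγ : ContinuousOn γ (Icc 0 1)) {c : ℝ}
    (h0 : (γ 0).1 ≤ c) (h1 : c ≤ (γ 1).1) : ∃ s ∈ Icc (0:ℝ) 1, (γ s).1 = c := by
  have hc : ContinuousOn (fun u => (γ u).1) (Icc 0 1) := continuous_fst.comp_continuousOn hγ
  obtain ⟨s, hs, hsc⟩ := intermediate_value_Icc (by norm_num : (0:ℝ) ≤ 1) hc ⟨h0, h1⟩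
  exact ⟨s, hs, hsc⟩

lemma myVarLB (γ : ℝ → ℝ × ℝ) {s : ℝ} (hs : s ∈ Icc (0:ℝ) 1) {b : ℝ}
    (h0 : b ≤ |(γ 0).2 - (γ s).2|) (h1 : b ≤ |(γ 1).2 - (γ s).2|) :
    ENNReal.ofReal (2 * b) ≤ eVariationOn γ (Icc 0 1) := by
  rcases le_or_gt b 0 with hb | hb
  · calc ENNReal.ofReal (2 * b) = 0 := by
          rw [ENNReal.ofReal_eq_zero]; linarith
    _ ≤ _ := zero_le'
  set u : ℕ → ℝ := fun i => if i = 0 then 0 else if i = 1 then s else 1 with hu_def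
  have hmono : Monotone u := by
    apply monotone_nat_of_le_succ
    intro i
    match i with
    | 0 => simpa [hu_def] using hs.1
    | 1 => simpa [hu_def] using hs.2
    | (k+2) => simp [hu_def]
  have hmem : ∀ i, u i ∈ Icc (0:ℝ) 1 := by
    intro i
    match i with
    | 0 => simp [hu_def]
    | 1 => simpa [hu_def] using hs
    | (k+2) => simp [hu_def]
  have hsum := eVariationOn.sum_le (f := γ) (n := 2) hmono hmem
  have hexp : ∑ i ∈ Finset.range 2, edist (γ (u (i+1))) (γ (u i))
      = edist (γ s) (γ 0) + edist (γ 1) (γ s) := by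
    rw [Finset.sum_range_succ, Finset.sum_range_one]
    simp [hu_def]
  rw [hexp] at hsum
  refine le_trans ?_ hsum
  have key : ∀ p q : ℝ × ℝ, b ≤ |p.2 - q.2| → ENNReal.ofReal b ≤ edist p q := by
    intro p q hpq
    calc ENNReal.ofReal b ≤ ENNReal.ofReal |p.2 - q.2| := ENNReal.ofReal_le_ofReal hpq
    _ = edist p.2 q.2 := by rw [edist_dist, Real.dist_eq]
    _ ≤ edist p q := by rw [Prod.edist_eq]; exact le_max_right _ _
  calc ENNReal.ofReal (2 * b) = ENNReal.ofReal b + ENNReal.ofReal b := by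
        rw [two_mul, ENNReal.ofReal_add hb.le hb.le]
  _ ≤ edist (γ s) (γ 0) + edist (γ 1) (γ s) := by
      apply add_le_add
      · exact key _ _ (by rwa [abs_sub_comm])
      · exact key _ _ h1

/-- Neither `Ω⁺` nor `Ω⁻` is quasiconvex. -/
theorem omega_not_quasiconvex (α : ℝ) (hα₀ : 0 < α) (hα₁ : α < 1) :
    NotQuasiconvex (OmegaPlus α) ∧ NotQuasiconvex (OmegaMinus α) := by
  have hps : ∀ x : ℝ, x ∈ Ioo (0:ℝ) 1 → psiC α x = infDist x cantorSet ^ α := by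
    intro x hx
    simp only [psiC, if_pos hx]
  constructor
  · -- Ω⁺
    intro K hK
    obtain ⟨n, hn⟩ := myParam hα₀ hα₁ K hK
    set t : ℝ := 1 / 3 ^ (n+2) with ht_def
    have ht : 0 < t := by positivity
    have ht9 : t ≤ 1/9 := by
      rw [ht_def]
      apply one_div_le_one_div_of_le (by norm_num)
      calc (9:ℝ) = 3 ^ 2 := by norm_num
      _ ≤ 3 ^ (n+2) := pow_le_pow_right₀ (by norm_num) (by omega)
    set h : ℝ := ((t/2 : ℝ)) ^ α with hh_def
    have hh : 0 < h := Real.rpow_pos_of_pos (by positivity) α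
    have hKt : 0 < 6 * K * t := by nlinarith
    set ε : ℝ := (h - 6*K*t)/2 with hε_def
    have hε : 0 < ε := by rw [hε_def]; linarith
    have h2t_mem : 2 * t ∈ cantorSet := by
      have := myMem_2t n
      rwa [show (2:ℝ) / 3 ^ (n+2) = 2 * t by rw [ht_def]; ring] at this
    have hpsi_t : psiC α t = 0 := by
      rw [hps t ⟨ht, by linarith⟩, infDist_zero_of_mem (myMem_t n),
        Real.zero_rpow hα₀.ne']
    have hpsi_2t : psiC α (2*t) = 0 := by
      rw [hps (2*t) ⟨by linarith, by linarith⟩, infDist_zero_of_mem h2t_mem,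
        Real.zero_rpow hα₀.ne']
    have hpsi_m : psiC α (3*t/2) = h := by
      rw [hps (3*t/2) ⟨by linarith, by linarith⟩]
      have hid : infDist (3*t/2) cantorSet = t/2 := by
        apply myInfDist (by linarith)
        · rw [show 3*t/2 - t/2 = t by ring, ht_def]; exact myMem_t n
        · intro z hz hzz
          refine myGap1 (n+1) z hz ⟨?_, ?_⟩
          · rw [show 1 / (3:ℝ)^(n+1+1) = t by rw [ht_def]]
            have := hzz.1; linarith
          · rw [show 2 / (3:ℝ)^(n+1+1) = 2*t by rw [ht_def]; ring]
            have := hzz.2; linarith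
      rw [hid, hh_def]
    refine ⟨(t, ε), ?_, (2*t, ε), ?_, ?_⟩
    · show psiC α t < ε
      rw [hpsi_t]; exact hε
    · show psiC α (2*t) < ε
      rw [hpsi_2t]; exact hε
    · intro γ hγcont hγ0 hγ1 hγsub
      obtain ⟨s, hsmem, hsc⟩ := myCross γ hγcont (c := 3*t/2)
        (by rw [hγ0]; show t ≤ 3*t/2; linarith)
        (by rw [hγ1]; show 3*t/2 ≤ 2*t; linarith)
      have hγs : γ s ∈ OmegaPlus α := hγsub ⟨s, hsmem, rfl⟩
      have hq : h < (γ s).2 := by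
        have := hγs
        simp only [OmegaPlus, mem_setOf_eq] at this
        rwa [hsc, hpsi_m] at this
      have hvar := myVarLB γ hsmem (b := h - ε) ?_ ?_
      · refine lt_of_lt_of_le ?_ hvar
        have hdist : dist ((t, ε) : ℝ × ℝ) ((2*t, ε) : ℝ × ℝ) = t := by
          rw [Prod.dist_eq]
          simp only [Real.dist_eq]
          rw [show |t - 2*t| = t by rw [abs_of_nonpos (by linarith)]; ring,
            show |ε - ε| = 0 by simp]
          exact max_eq_left ht.le
        rw [hdist, ENNReal.ofReal_lt_ofReal_iff (by rw [hε_def]; nlinarith)]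
        rw [hε_def]
        nlinarith
      · rw [hγ0]
        show h - ε ≤ |ε - (γ s).2|
        rw [abs_sub_comm]
        refine le_trans (by linarith) (le_abs_self _)
      · rw [hγ1]
        show h - ε ≤ |ε - (γ s).2|
        rw [abs_sub_comm]
        refine le_trans (by linarith) (le_abs_self _)
  · -- Ω⁻
    intro K hK
    obtain ⟨n, hn⟩ := myParam hα₀ hα₁ K hK
    set t : ℝ := 1 / 3 ^ (n+2) with ht_def
    have ht : 0 < t := by positivity
    have ht9 : t ≤ 1/9 := by
      rw [ht_def]
      apply one_div_le_one_div_of_le (by norm_num)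
      calc (9:ℝ) = 3 ^ 2 := by norm_num
      _ ≤ 3 ^ (n+2) := pow_le_pow_right₀ (by norm_num) (by omega)
    set h : ℝ := ((t/2 : ℝ)) ^ α with hh_def
    have hh : 0 < h := Real.rpow_pos_of_pos (by positivity) α
    have hKt : 0 < 6 * K * t := by nlinarith
    set ε : ℝ := (h - 6*K*t)/2 with hε_def
    have hε : 0 < ε := by rw [hε_def]; linarith
    have hεh : h - ε > 0 := by rw [hε_def]; linarith
    have h2t_mem : 2 * t ∈ cantorSet := by
      have := myMem_2t n
      rwa [show (2:ℝ) / 3 ^ (n+2) = 2 * t by rw [ht_def]; ring] at this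
    have hpsi_2t : psiC α (2*t) = 0 := by
      rw [hps (2*t) ⟨by linarith, by linarith⟩, infDist_zero_of_mem h2t_mem,
        Real.zero_rpow hα₀.ne']
    have hpsi_m1 : psiC α (3*t/2) = h := by
      rw [hps (3*t/2) ⟨by linarith, by linarith⟩]
      have hid : infDist (3*t/2) cantorSet = t/2 := by
        apply myInfDist (by linarith)
        · rw [show 3*t/2 - t/2 = t by ring, ht_def]; exact myMem_t n
        · intro z hz hzz
          refine myGap1 (n+1) z hz ⟨?_, ?_⟩
          · rw [show 1 / (3:ℝ)^(n+1+1) = t by rw [ht_def]]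
            have := hzz.1; linarith
          · rw [show 2 / (3:ℝ)^(n+1+1) = 2*t by rw [ht_def]; ring]
            have := hzz.2; linarith
      rw [hid, hh_def]
    have hpsi_m2 : psiC α (15*t/2) = h := by
      rw [hps (15*t/2) ⟨by linarith, by linarith⟩]
      have hid : infDist (15*t/2) cantorSet = t/2 := by
        apply myInfDist (by linarith)
        · have := myMem_7t n
          rwa [show (7:ℝ) / 3 ^ (n+2) = 15*t/2 - t/2 by rw [ht_def]; ring] at this
        · intro z hz hzz
          refine myGap2 n z hz ⟨?_, ?_⟩
          · rw [show 7 / (3:ℝ)^(n+2) = 7*t by rw [ht_def]; ring]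
            have := hzz.1; linarith
          · rw [show 8 / (3:ℝ)^(n+2) = 8*t by rw [ht_def]; ring]
            have := hzz.2; linarith
      rw [hid, hh_def]
    refine ⟨(3*t/2, h - ε), ?_, (15*t/2, h - ε), ?_, ?_⟩
    · show h - ε < psiC α (3*t/2)
      rw [hpsi_m1]; linarith
    · show h - ε < psiC α (15*t/2)
      rw [hpsi_m2]; linarith
    · intro γ hγcont hγ0 hγ1 hγsub
      obtain ⟨s, hsmem, hsc⟩ := myCross γ hγcont (c := 2*t)
        (by rw [hγ0]; show 3*t/2 ≤ 2*t; linarith)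
        (by rw [hγ1]; show 2*t ≤ 15*t/2; linarith)
      have hγs : γ s ∈ OmegaMinus α := hγsub ⟨s, hsmem, rfl⟩
      have hq : (γ s).2 < 0 := by
        have := hγs
        simp only [OmegaMinus, mem_setOf_eq] at this
        rwa [hsc, hpsi_2t] at this
      have hvar := myVarLB γ hsmem (b := h - ε) ?_ ?_
      · refine lt_of_lt_of_le ?_ hvar
        have hdist : dist ((3*t/2, h - ε) : ℝ × ℝ) ((15*t/2, h - ε) : ℝ × ℝ) = 6*t := by
          rw [Prod.dist_eq]
          simp only [Real.dist_eq]
          rw [show |3*t/2 - 15*t/2| = 6*t by rw [abs_of_nonpos (by linarith)]; ring,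
            show |h - ε - (h - ε)| = 0 by simp]
          exact max_eq_left (by linarith)
        rw [hdist, ENNReal.ofReal_lt_ofReal_iff (by rw [hε_def]; nlinarith)]
        rw [hε_def]
        nlinarith
      · rw [hγ0]
        show h - ε ≤ |h - ε - (γ s).2|
        refine le_trans (by linarith) (le_abs_self _)
      · rw [hγ1]
        show h - ε ≤ |h - ε - (γ s).2|
        refine le_trans (by linarith) (le_abs_self _)
end
end
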